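/- The diagonal operators Λ_{k,n} in the expansion (IR₀)ⁿ = ∑_{k=1}ⁿ Λ_{k,n} Iᵏ R₀ᵏ admit the closed form Λ_{k,n} = ∑_{|α|=n−k} ∏_{t=1}^k (∑_{l=1}^t D₀^{(l)})^{α_t}, where the sum runs over multi-indices α = (α₁,…,α_k) of non-negative integers with α₁+⋯+α_k = n−k. -/

import Mathlib

/-- Diagonal entries of `D₀ = diag(1, −1/2, −1/6, …, −1/(n(n+1)), …)`. -/
noncomputable def d0 : ℕ → ℂ := fun m => if m = 0 then 1 else -(1 / ((m : ℂ) * ((m : ℂ) + 1)))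

/-- Entries of the `j`-fold forward diagonal shift `D^{(j)}`. -/
def fwdShiftK (d : ℕ → ℂ) (j : ℕ) : ℕ → ℂ := fun m => if m < j then 0 else d (m - j)

open Finset in
lemma key_antidiag_split (x : ℕ → ℂ) (k d : ℕ) :
    ∑ α ∈ Finset.Nat.antidiagonalTuple (k+1) (d+1), ∏ t : Fin (k+1), x t.val ^ α t
    = (∑ α ∈ Finset.Nat.antidiagonalTuple k (d+1), ∏ t : Fin k, x t.val ^ α t)
      + x k * ∑ α ∈ Finset.Nat.antidiagonalTuple (k+1) d, ∏ t : Fin (k+1), x t.val ^ α t := by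
  have hne : ∀ t : Fin k, (t.castSucc : Fin (k+1)) ≠ Fin.last k :=
    fun t => (Fin.castSucc_lt_last t).ne
  rw [← Finset.sum_filter_add_sum_filter_not (Finset.Nat.antidiagonalTuple (k+1) (d+1))
    (fun α => α (Fin.last k) = 0)]
  congr 1
  · refine Finset.sum_nbij' (fun α => Fin.init α) (fun α => Fin.snoc α 0) ?_ ?_ ?_ ?_ ?_
    · intro α hα
      simp only [mem_filter, Finset.Nat.mem_antidiagonalTuple, Fin.sum_univ_castSucc] at hα
      obtain ⟨h1, h2⟩ := hα
      rw [h2, add_zero] at h1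
      simpa [Finset.Nat.mem_antidiagonalTuple, Fin.init] using h1
    · intro α hα
      simp only [Finset.Nat.mem_antidiagonalTuple] at hα
      simp only [mem_filter, Finset.Nat.mem_antidiagonalTuple, Fin.sum_univ_castSucc,
        Fin.snoc_castSucc, Fin.snoc_last, add_zero, and_true]
      exact hα
    · intro α hα
      simp only [mem_filter] at hα
      rw [← hα.2]
      exact Fin.snoc_init_self α
    · intro α hα
      simp
    · intro α hα
      simp only [mem_filter] at hα
      rw [Fin.prod_univ_castSucc]
      simp [hα.2, Fin.init]
  · rw [Finset.mul_sum]
    refine (Finset.sum_nbij'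
      (fun α => Function.update α (Fin.last k) (α (Fin.last k) + 1))
      (fun α => Function.update α (Fin.last k) (α (Fin.last k) - 1)) ?_ ?_ ?_ ?_ ?_).symm
    · intro α hα
      simp only [Finset.Nat.mem_antidiagonalTuple] at hα
      rw [Fin.sum_univ_castSucc] at hα
      simp only [mem_filter, Finset.Nat.mem_antidiagonalTuple, Fin.sum_univ_castSucc]
      constructor
      · rw [Function.update_self]
        rw [Finset.sum_congr rfl (fun t _ => Function.update_of_ne (hne t) _ α)]
        omega
      · simp [Function.update_self]
    · intro α hα
      simp only [mem_filter, Finset.Nat.mem_antidiagonalTuple] at hα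
      obtain ⟨h1, h2⟩ := hα
      rw [Fin.sum_univ_castSucc] at h1
      simp only [Finset.Nat.mem_antidiagonalTuple, Fin.sum_univ_castSucc]
      rw [Function.update_self]
      rw [Finset.sum_congr rfl (fun t _ => Function.update_of_ne (hne t) _ α)]
      omega
    · intro α hα
      funext t
      rcases eq_or_ne t (Fin.last k) with rfl | ht
      · simp
      · simp [Function.update_of_ne ht]
    · intro α hα
      simp only [mem_filter] at hα
      funext t
      rcases eq_or_ne t (Fin.last k) with rfl | ht
      · simp only [Function.update_self]
        have : α (Fin.last k) ≠ 0 := hα.2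
        omega
      · simp [Function.update_of_ne ht]
    · intro α hα
      rw [Fin.prod_univ_castSucc, Fin.prod_univ_castSucc]
      simp only [Function.update_self, Function.update_of_ne (hne _)]
      rw [Fin.val_last, pow_succ]
      ring

/-- Closed form for the coefficients `Λ_{k,n}` of the expansion `(IR₀)ⁿ = ∑ Λ_{k,n}IᵏR₀ᵏ`:
`Λ_{k,n} = ∑_{|α|=n−k} ∏_{t=1}^k (∑_{l=1}^t D₀^{(l)})^{α_t}`, the sum being over
multi-indices `α = (α₁,…,α_k)` of non-negative integers with `α₁+⋯+α_k = n−k`. -/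
theorem stmt12 (Λ : ℕ → ℕ → ℕ → ℂ)
    (hdiagid : ∀ n : ℕ, 1 ≤ n → Λ n n = fun _ => 1)
    (hzero : ∀ n : ℕ, 1 ≤ n → Λ 0 n = fun _ => 0)
    (hout : ∀ k n : ℕ, n < k → Λ k n = fun _ => 0)
    (hrec : ∀ k n : ℕ, 1 ≤ k → k < n → Λ k n = fun m =>
      Λ (k - 1) (n - 1) m + (∑ l ∈ Finset.Icc 1 k, fwdShiftK d0 l m) * Λ k (n - 1) m)
    (k n : ℕ) (hk : 1 ≤ k) (hkn : k ≤ n) (m : ℕ) :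
    Λ k n m = ∑ α ∈ Finset.Nat.antidiagonalTuple k (n - k),
      ∏ t : Fin k, (∑ l ∈ Finset.Icc 1 (t.val + 1), fwdShiftK d0 l m) ^ (α t) := by
  induction n using Nat.strong_induction_on generalizing k with
  | _ n ih =>
    rcases eq_or_lt_of_le hkn with rfl | hlt
    · rw [hdiagid k hk]
      simp [Nat.sub_self, Finset.Nat.antidiagonalTuple_zero_right]
    · obtain ⟨k', rfl⟩ : ∃ k', k = k' + 1 := ⟨k - 1, by omega⟩
      obtain ⟨d, hd⟩ : ∃ d, n - (k' + 1) = d + 1 := ⟨n - (k' + 1) - 1, by omega⟩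
      have hrec' := congrFun (hrec (k' + 1) n hk hlt) m
      simp only [Nat.add_sub_cancel] at hrec'
      have hΛ2 : Λ (k' + 1) (n - 1) m = ∑ α ∈ Finset.Nat.antidiagonalTuple (k' + 1) d,
          ∏ t : Fin (k' + 1), (∑ l ∈ Finset.Icc 1 (t.val + 1), fwdShiftK d0 l m) ^ (α t) := by
        have := ih (n - 1) (by omega) (k' + 1) hk (by omega)
        rwa [show n - 1 - (k' + 1) = d by omega] at this
      have hΛ1 : Λ k' (n - 1) m = ∑ α ∈ Finset.Nat.antidiagonalTuple k' (d + 1),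
          ∏ t : Fin k', (∑ l ∈ Finset.Icc 1 (t.val + 1), fwdShiftK d0 l m) ^ (α t) := by
        rcases Nat.eq_zero_or_pos k' with rfl | hk'
        · rw [hzero (n - 1) (by omega)]
          simp [Finset.Nat.antidiagonalTuple_zero_succ]
        · have := ih (n - 1) (by omega) k' hk' (by omega)
          rwa [show n - 1 - k' = d + 1 by omega] at this
      rw [hrec', hΛ1, hΛ2, hd]
      exact (key_antidiag_split (fun j => ∑ l ∈ Finset.Icc 1 (j + 1), fwdShiftK d0 l m) k' d).symm
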